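/- Let b₁, c₂ be integers with b₁ ≥ 0 and b₁ ≥ c₂. Let α : ℂ[x₁,…,x₆] → ℂ[y₁^{±1}, y₂^{±1}, y₃^{±1}] be the ℂ-algebra homomorphism determined by α(x₁) = y₁, α(x₂) = y₂, α(x₃) = y₁y₂^{−1}, α(x₄) = y₁^{−b₁−1}y₂y₃, α(x₅) = y₃, α(x₆) = y₁^{−c₂}y₃. Then the kernel of α equals the ideal generated by the three binomials x₁ − x₂x₃, x₂^{b₁} x₃^{b₁+1} x₄ − x₅, and x₂^{b₁−c₂} x₃^{b₁+1−c₂} x₄ − x₆. -/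

import Mathlib

open MvPolynomial

/-- The Laurent monomial `y₁^{v 0} y₂^{v 1} y₃^{v 2}` in the Laurent polynomial ring
`ℂ[y₁^{±1}, y₂^{±1}, y₃^{±1}]`, realized as `AddMonoidAlgebra ℂ (Fin 3 → ℤ)`. -/
noncomputable def laurentMonomial3 (v : Fin 3 → ℤ) : AddMonoidAlgebra ℂ (Fin 3 → ℤ) :=
  AddMonoidAlgebra.single v 1

namespace Toric313

@[simp] lemma cons_val4 {α : Type*} (a b c d e f : α) : ![a,b,c,d,e,f] 4 = e := rfl
@[simp] lemma cons_val5 {α : Type*} (a b c d e f : α) : ![a,b,c,d,e,f] 5 = f := rfl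

noncomputable def fexp (b₁ : ℤ) : (Fin 3 →₀ ℕ) →+ (Fin 3 → ℤ) where
  toFun m := fun j => (m 0 : ℤ) * (![0,1,0] j) + (m 1 : ℤ) * (![1,-1,0] j)
      + (m 2 : ℤ) * (![-(b₁+1),1,1] j)
  map_zero' := by funext j; simp
  map_add' m m' := by funext j; simp only [Finsupp.add_apply, Pi.add_apply]; push_cast; ring

lemma fexp_apply (b₁ : ℤ) (m : Fin 3 →₀ ℕ) :
    fexp b₁ m = ![(m 1 : ℤ) - (m 2 : ℤ) * (b₁ + 1), (m 0 : ℤ) - m 1 + m 2, (m 2 : ℤ)] := by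
  funext j
  fin_cases j <;> simp [fexp] <;> ring

lemma fexp_inj (b₁ : ℤ) : Function.Injective (fexp b₁) := by
  intro m m' h
  rw [fexp_apply, fexp_apply] at h
  have h0 := congrFun h 0
  have h1 := congrFun h 1
  have h2 := congrFun h 2
  simp at h0 h1 h2
  rw [h2] at h0
  have e2 : m 2 = m' 2 := by exact_mod_cast h2
  have e1 : m 1 = m' 1 := by exact_mod_cast (by linarith : (m 1 : ℤ) = m' 1)
  have e0 : m 0 = m' 0 := by omega
  ext j
  fin_cases j <;> simpa using (by assumption : _)

noncomputable def βmap (b₁ : ℤ) : MvPolynomial (Fin 3) ℂ →ₐ[ℂ] AddMonoidAlgebra ℂ (Fin 3 → ℤ) :=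
  AddMonoidAlgebra.mapDomainAlgHom ℂ ℂ (fexp b₁)

lemma βmap_inj (b₁ : ℤ) : Function.Injective (βmap b₁) :=
  AddMonoidAlgebra.mapDomain_injective (fexp_inj b₁)

lemma βmap_X (b₁ : ℤ) (i : Fin 3) :
    βmap b₁ (X i) = AddMonoidAlgebra.single (fexp b₁ (Finsupp.single i 1)) 1 := by
  show AddMonoidAlgebra.mapDomain (fexp b₁) (AddMonoidAlgebra.single (Finsupp.single i 1) 1) = _
  rw [AddMonoidAlgebra.mapDomain_single]

noncomputable def αmap (b₁ c₂ : ℤ) : MvPolynomial (Fin 6) ℂ →ₐ[ℂ] AddMonoidAlgebra ℂ (Fin 3 → ℤ) :=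
  MvPolynomial.aeval
        ![laurentMonomial3 ![1, 0, 0], laurentMonomial3 ![0, 1, 0],
          laurentMonomial3 ![1, -1, 0], laurentMonomial3 ![-(b₁ + 1), 1, 1],
          laurentMonomial3 ![0, 0, 1], laurentMonomial3 ![-c₂, 0, 1]]

noncomputable def ιmap : MvPolynomial (Fin 3) ℂ →ₐ[ℂ] MvPolynomial (Fin 6) ℂ :=
  aeval ![X 1, X 2, X 3]

noncomputable def φmap (b₁ c₂ : ℤ) : MvPolynomial (Fin 6) ℂ →ₐ[ℂ] MvPolynomial (Fin 3) ℂ :=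
  aeval ![X 0 * X 1, X 0, X 1, X 2,
    X 0 ^ b₁.toNat * X 1 ^ (b₁+1).toNat * X 2,
    X 0 ^ (b₁ - c₂).toNat * X 1 ^ (b₁+1-c₂).toNat * X 2]

noncomputable def Igen (b₁ c₂ : ℤ) : Ideal (MvPolynomial (Fin 6) ℂ) :=
  Ideal.span {(X 0 - X 1 * X 2 : MvPolynomial (Fin 6) ℂ),
      X 1 ^ b₁.toNat * X 2 ^ (b₁ + 1).toNat * X 3 - X 4,
      X 1 ^ (b₁ - c₂).toNat * X 2 ^ (b₁ + 1 - c₂).toNat * X 3 - X 5}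

lemma comp_eq (b₁ c₂ : ℤ) : (αmap b₁ c₂).comp ιmap = βmap b₁ := by
  apply MvPolynomial.algHom_ext
  intro i
  fin_cases i <;> simp [ιmap, αmap, βmap_X, laurentMonomial3, fexp_apply]

lemma X_sub_mem (b₁ c₂ : ℤ) (i : Fin 6) : X i - ιmap (φmap b₁ c₂ (X i)) ∈ Igen b₁ c₂ := by
  fin_cases i <;> simp [ιmap, φmap, map_pow]
  · exact Ideal.subset_span (by simp)
  all_goals
    rw [show ∀ a b : MvPolynomial (Fin 6) ℂ, a - b = -(b - a) from fun a b => by ring]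
    exact (Igen b₁ c₂).neg_mem (Ideal.subset_span (by simp))

lemma key (b₁ c₂ : ℤ) (p : MvPolynomial (Fin 6) ℂ) :
    p - ιmap (φmap b₁ c₂ p) ∈ Igen b₁ c₂ := by
  induction p using MvPolynomial.induction_on with
  | C a => simp
  | add p q hp hq =>
      have : p + q - ιmap (φmap b₁ c₂ (p + q))
          = (p - ιmap (φmap b₁ c₂ p)) + (q - ιmap (φmap b₁ c₂ q)) := by
        rw [map_add, map_add]; ring
      rw [this]; exact Ideal.add_mem _ hp hq
  | mul_X p i hp =>
      have : p * X i - ιmap (φmap b₁ c₂ (p * X i))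
          = (p - ιmap (φmap b₁ c₂ p)) * X i
            + ιmap (φmap b₁ c₂ p) * (X i - ιmap (φmap b₁ c₂ (X i))) := by
        rw [map_mul, map_mul]; ring
      rw [this]
      exact Ideal.add_mem _ (Ideal.mul_mem_right _ _ hp)
        (Ideal.mul_mem_left _ _ (X_sub_mem b₁ c₂ i))

lemma gen_ker (b₁ c₂ : ℤ) (hb₁ : 0 ≤ b₁) (hc₂ : c₂ ≤ b₁) :
    Igen b₁ c₂ ≤ RingHom.ker (αmap b₁ c₂) := by
  rw [Igen, Ideal.span_le]
  rintro g hg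
  simp only [Set.mem_insert_iff, Set.mem_singleton_iff] at hg
  rcases hg with rfl | rfl | rfl <;>
    · simp only [SetLike.mem_coe, RingHom.mem_ker, AlgHom.coe_ringHom_mk, map_sub, map_mul,
        map_pow, αmap, aeval_X, Matrix.cons_val_zero, Matrix.cons_val_one, Matrix.head_cons,
        Matrix.cons_val_two, Matrix.tail_cons, Matrix.cons_val_three, cons_val4, cons_val5,
        laurentMonomial3, AddMonoidAlgebra.single_pow, AddMonoidAlgebra.single_mul_single,
        one_pow, mul_one, one_mul, sub_eq_zero]
      congr 1
      funext j
      fin_cases j <;> simp <;> omega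

end Toric313

open Toric313 in
theorem toric_ideal_case_3_1_3 (b₁ c₂ : ℤ) (hb₁ : 0 ≤ b₁) (hc₂ : c₂ ≤ b₁) :
    RingHom.ker (MvPolynomial.aeval
        ![laurentMonomial3 ![1, 0, 0], laurentMonomial3 ![0, 1, 0],
          laurentMonomial3 ![1, -1, 0], laurentMonomial3 ![-(b₁ + 1), 1, 1],
          laurentMonomial3 ![0, 0, 1], laurentMonomial3 ![-c₂, 0, 1]] :
      MvPolynomial (Fin 6) ℂ →ₐ[ℂ] AddMonoidAlgebra ℂ (Fin 3 → ℤ)) =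
    Ideal.span {(X 0 - X 1 * X 2 : MvPolynomial (Fin 6) ℂ),
      X 1 ^ b₁.toNat * X 2 ^ (b₁ + 1).toNat * X 3 - X 4,
      X 1 ^ (b₁ - c₂).toNat * X 2 ^ (b₁ + 1 - c₂).toNat * X 3 - X 5} := by
  show RingHom.ker (αmap b₁ c₂) = Igen b₁ c₂
  apply le_antisymm _ (gen_ker b₁ c₂ hb₁ hc₂)
  intro p hp
  have hkey := key b₁ c₂ p
  have h1 : αmap b₁ c₂ (ιmap (φmap b₁ c₂ p)) = 0 := by
    have h2 : αmap b₁ c₂ (p - ιmap (φmap b₁ c₂ p)) = 0 :=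
      gen_ker b₁ c₂ hb₁ hc₂ hkey
    have hp0 : αmap b₁ c₂ p = 0 := hp
    rw [map_sub, hp0, zero_sub, neg_eq_zero] at h2
    exact h2
  have h3 : βmap b₁ (φmap b₁ c₂ p) = 0 := by
    rw [← comp_eq b₁ c₂]; exact h1
  have h4 : φmap b₁ c₂ p = 0 := βmap_inj b₁ (by simpa using h3)
  rw [h4, map_zero, sub_zero] at hkey
  exact hkey
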